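/- Every identity u ≈ v satisfied by the monoid M(a²b²) with con(u) = con(v) and in which each variable occurs exactly twice on both sides satisfies property P_{(1 ≤ 2, 2 ≤ 2)}: for all variables x, y occurring twice in u and v, the first occurrence of x precedes the second occurrence of y in u if and only if the first occurrence of x precedes the second occurrence of y in v. -/

import Mathlib

open scoped Classical

def Fac (W : Set (List ℕ)) (u : List ℕ) : Prop := u = [] ∨ ∃ w ∈ W, u <:+: w

lemma Fac.of_infix {W : Set (List ℕ)} {u v : List ℕ} (h : Fac W u) (hv : v <:+: u) :
    Fac W v := by
  rcases h with rfl | ⟨w, hw, hu⟩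
  · left; simpa using hv
  · exact Or.inr ⟨w, hw, hv.trans hu⟩

def MWord (W : Set (List ℕ)) : Type := Option {u : List ℕ // Fac W u}

noncomputable def mwMul {W : Set (List ℕ)} : MWord W → MWord W → MWord W
  | some a, some b =>
      if h : Fac W (a.1 ++ b.1) then some ⟨a.1 ++ b.1, h⟩ else none
  | _, _ => none

lemma mwMul_none_left {W : Set (List ℕ)} (b : MWord W) : mwMul none b = none := by
  cases b <;> rfl

lemma mwMul_none_right {W : Set (List ℕ)} (a : MWord W) : mwMul a none = none := by
  cases a <;> rfl

lemma mwMul_some_some {W : Set (List ℕ)} (a b : {u : List ℕ // Fac W u}) :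
    mwMul (some a) (some b) =
      if h : Fac W (a.1 ++ b.1) then some ⟨a.1 ++ b.1, h⟩ else none := rfl

noncomputable instance MWord.monoid (W : Set (List ℕ)) : Monoid (MWord W) where
  mul := mwMul
  one := some ⟨[], Or.inl rfl⟩
  one_mul a := by
    show mwMul (some ⟨[], Or.inl rfl⟩) a = a
    cases a with
    | none => rfl
    | some a => exact dif_pos a.2
  mul_one a := by
    show mwMul a (some ⟨[], Or.inl rfl⟩) = a
    cases a with
    | none => rfl
    | some a =>
      have h : Fac W (a.1 ++ []) := by simpa using a.2
      rw [mwMul_some_some, dif_pos h]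
      exact congrArg some (Subtype.ext (List.append_nil _))
  mul_assoc a b c := by
    show mwMul (mwMul a b) c = mwMul a (mwMul b c)
    cases a with
    | none => simp [mwMul_none_left]; rfl
    | some a =>
      cases b with
      | none => erw [mwMul_none_right, mwMul_none_left]
      | some b =>
        cases c with
        | none => erw [mwMul_none_right, mwMul_none_right]
        | some c =>
          by_cases hab : Fac W (a.1 ++ b.1)
          · by_cases hbc : Fac W (b.1 ++ c.1)
            · rw [mwMul_some_some b c, dif_pos hbc, mwMul_some_some a b, dif_pos hab,
                mwMul_some_some, mwMul_some_some]
              by_cases habc : Fac W (a.1 ++ b.1 ++ c.1)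
              · have habc' : Fac W (a.1 ++ (b.1 ++ c.1)) := by
                  rwa [← List.append_assoc]
                rw [dif_pos habc, dif_pos habc']
                exact congrArg some (Subtype.ext (List.append_assoc _ _ _))
              · have habc' : ¬ Fac W (a.1 ++ (b.1 ++ c.1)) := by
                  rwa [← List.append_assoc]
                rw [dif_neg habc, dif_neg habc']
            · rw [mwMul_some_some b c, dif_neg hbc]
              erw [mwMul_none_right]
              rw [mwMul_some_some a b, dif_pos hab, mwMul_some_some]
              have : ¬ Fac W (a.1 ++ b.1 ++ c.1) := fun h =>
                hbc (h.of_infix (by rw [List.append_assoc]; exact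
                  (List.suffix_append a.1 (b.1 ++ c.1)).isInfix))
              rw [dif_neg this]
          · rw [mwMul_some_some a b, dif_neg hab]
            erw [mwMul_none_left]
            cases hc : mwMul (some b) (some c) with
            | none => erw [mwMul_none_right]
            | some bc =>
              rw [mwMul_some_some]
              have hbc : bc.1 = b.1 ++ c.1 := by
                rw [mwMul_some_some] at hc
                by_cases h : Fac W (b.1 ++ c.1)
                · rw [dif_pos h] at hc; cases hc; rfl
                · rw [dif_neg h] at hc; cases hc
              have : ¬ Fac W (a.1 ++ bc.1) := by
                rw [hbc]
                exact fun h => hab (h.of_infix (by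
                  rw [← List.append_assoc]
                  exact (List.prefix_append (a.1 ++ b.1) c.1).isInfix))
              rw [dif_neg this]

/-- A monoid `M` satisfies the identity `u ≈ v` if every substitution of elements of
`M` for the variables makes the two sides equal. -/
def SatM (M : Type*) [Monoid M] (u v : List ℕ) : Prop :=
  ∀ f : ℕ → M, (u.map f).prod = (v.map f).prod

/-- The position (index) in `u` of the `i`-th (1-indexed) occurrence of the
variable `x`; equals `u.length` if there is no such occurrence. -/
def nthOccPos (u : List ℕ) (x i : ℕ) : ℕ :=
  ((List.range u.length).filter (fun k => u[k]? == some x)).getD (i - 1) u.length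

/-- `(ᵢx) <_u (ⱼy)` : the `i`-th occurrence of `x` precedes the `j`-th occurrence
of `y` in the word `u`. -/
def Precedes (u : List ℕ) (x i y j : ℕ) : Prop := nthOccPos u x i < nthOccPos u y j


/-! ### Auxiliary machinery -/

section Aux

variable {W : Set (List ℕ)}

/-- The canonical map from words to `MWord W`. -/
noncomputable def hW (W : Set (List ℕ)) (w : List ℕ) : MWord W :=
  if h : Fac W w then some ⟨w, h⟩ else none

lemma hW_mul (s t : List ℕ) : hW W s * hW W t = hW W (s ++ t) := by
  show mwMul (hW W s) (hW W t) = hW W (s ++ t)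
  simp only [hW]
  by_cases hs : Fac W s
  · by_cases ht : Fac W t
    · erw [dif_pos hs, dif_pos ht, mwMul_some_some]
      rfl
    · erw [dif_neg ht, mwMul_none_right,
        dif_neg (fun h => ht (Fac.of_infix h (List.suffix_append s t).isInfix))]
  · erw [dif_neg hs, mwMul_none_left,
      dif_neg (fun h => hs (Fac.of_infix h (List.prefix_append s t).isInfix))]

lemma prod_map_hW (δ : ℕ → List ℕ) (u : List ℕ) :
    (u.map (fun z => hW W (δ z))).prod = hW W (u.flatMap δ) := by
  induction u with
  | nil =>
    show (1 : MWord W) = hW W []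
    have h0 : Fac W [] := Or.inl rfl
    erw [hW, dif_pos h0]
    rfl
  | cons a u ih =>
    rw [List.map_cons, List.prod_cons, ih, hW_mul, List.flatMap_cons]

/-- The substitution pattern: `x ↦ [1]`, `y ↦ [0]`, everything else `↦ []`. -/
def dxy (x y z : ℕ) : List ℕ := if z = x then [1] else if z = y then [0] else []

lemma flatMap_no_x {x y : ℕ} (hxy : x ≠ y) {s : List ℕ} (hs : x ∉ s) :
    s.flatMap (dxy x y) = List.replicate (s.count y) 0 := by
  induction s with
  | nil => rfl
  | cons a s ih =>
    have hax : a ≠ x := fun h => hs (h ▸ (List.mem_cons_self : a ∈ a :: s))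
    have hs' : x ∉ s := fun h => hs (List.mem_cons_of_mem a h)
    rw [List.flatMap_cons, ih hs', List.count_cons, dxy]
    by_cases hay : a = y
    · simp [hay, hxy.symm, List.replicate_succ]
    · simp [hax, hay]

lemma flatMap_no_y {x y : ℕ} {t : List ℕ} (ht : y ∉ t) :
    t.flatMap (dxy x y) = List.replicate (t.count x) 1 := by
  induction t with
  | nil => rfl
  | cons a t ih =>
    have hay : a ≠ y := fun h => ht (h ▸ (List.mem_cons_self : a ∈ a :: t))
    have ht' : y ∉ t := fun h => ht (List.mem_cons_of_mem a h)
    rw [List.flatMap_cons, ih ht', List.count_cons, dxy]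
    by_cases hax : a = x
    · simp [hax, List.replicate_succ]
    · simp [hax, hay]

lemma exists_split_first {u : List ℕ} {x : ℕ} (h : x ∈ u) :
    ∃ s t, u = s ++ x :: t ∧ x ∉ s := by
  induction u with
  | nil => cases h
  | cons a u ih =>
    by_cases hax : a = x
    · exact ⟨[], u, by simp [hax], by simp⟩
    · have hxu : x ∈ u := by
        rcases List.mem_cons.1 h with h' | h'
        · exact absurd h'.symm hax
        · exact h'
      rcases ih hxu with ⟨s, t, rfl, hxs⟩
      refine ⟨a :: s, t, rfl, ?_⟩
      simp only [List.mem_cons, not_or]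
      exact ⟨fun h' => hax h'.symm, hxs⟩

lemma flatMap_eq_aabb_iff {x y : ℕ} (hxy : x ≠ y) {u : List ℕ}
    (hx : u.count x = 2) (hy : u.count y = 2) :
    u.flatMap (dxy x y) = [0, 0, 1, 1] ↔ ∃ s t, u = s ++ t ∧ x ∉ s ∧ y ∉ t := by
  constructor
  · intro h
    have hxu : x ∈ u := List.count_pos_iff.1 (by omega)
    rcases exists_split_first hxu with ⟨s, t', rfl, hxs⟩
    refine ⟨s, x :: t', rfl, hxs, ?_⟩
    intro hyxt
    have hyt' : y ∈ t' := by
      rcases List.mem_cons.1 hyxt with h' | h'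
      · exact absurd h'.symm hxy
      · exact h'
    have hys : s.count y ≤ 1 := by
      have h1 : (x :: t').count y = t'.count y + (if x = y then 1 else 0) := by
        rw [List.count_cons]; simp
      have h2 : 1 ≤ t'.count y := List.count_pos_iff.2 hyt'
      have h3 : s.count y + (x :: t').count y = 2 := by
        rw [← List.count_append]; exact hy
      omega
    have hflat : (s ++ x :: t').flatMap (dxy x y) =
        List.replicate (s.count y) 0 ++ 1 :: t'.flatMap (dxy x y) := by
      rw [List.flatMap_append, flatMap_no_x hxy hxs, List.flatMap_cons]
      simp [dxy]
    rw [hflat] at h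
    rcases (by omega : s.count y = 0 ∨ s.count y = 1) with hk | hk <;>
      rw [hk] at h <;> simp at h
  · rintro ⟨s, t, rfl, hxs, hyt⟩
    have hys : s.count y = 2 := by
      have := hy
      rw [List.count_append, List.count_eq_zero.2 hyt] at this
      omega
    have hxt : t.count x = 2 := by
      have := hx
      rw [List.count_append, List.count_eq_zero.2 hxs] at this
      omega
    rw [List.flatMap_append, flatMap_no_x hxy hxs, flatMap_no_y hyt, hys, hxt]
    rfl

/-- The list of positions of `x` in `u`. -/
def occ (u : List ℕ) (x : ℕ) : List ℕ :=
  (List.range u.length).filter (fun k => u[k]? == some x)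

lemma nthOccPos_eq (u : List ℕ) (x i : ℕ) :
    nthOccPos u x i = (occ u x).getD (i - 1) u.length := rfl

lemma mem_occ {u : List ℕ} {x k : ℕ} :
    k ∈ occ u x ↔ k < u.length ∧ u[k]? = some x := by
  simp [occ, List.mem_filter, List.mem_range]

lemma occ_pairwise (u : List ℕ) (x : ℕ) : (occ u x).Pairwise (· < ·) :=
  List.Pairwise.sublist List.filter_sublist List.pairwise_lt_range

lemma occ_cons (a : ℕ) (u : List ℕ) (x : ℕ) :
    occ (a :: u) x = (if a = x then [0] else []) ++ (occ u x).map (· + 1) := by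
  unfold occ
  rw [List.length_cons, List.range_succ_eq_map, List.filter_cons, List.filter_map]
  have h2 : ((fun k => (a :: u)[k]? == some x) ∘ Nat.succ) = fun k => u[k]? == some x := by
    funext k
    simp
  rw [h2]
  by_cases hax : a = x <;>
    simp [hax, Nat.succ_eq_add_one]

lemma occ_length (u : List ℕ) (x : ℕ) : (occ u x).length = u.count x := by
  induction u with
  | nil => rfl
  | cons a u ih =>
    rw [occ_cons, List.length_append, List.length_map, ih, List.count_cons]
    by_cases hax : a = x <;> simp [hax] <;> omega

lemma occ_eq_pair {u : List ℕ} {x : ℕ} (hx : u.count x = 2) :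
    ∃ p q, occ u x = [p, q] ∧ p < q := by
  have hlen : (occ u x).length = 2 := by rw [occ_length, hx]
  rcases List.length_eq_two.1 hlen with ⟨p, q, hpq⟩
  refine ⟨p, q, hpq, ?_⟩
  have := occ_pairwise u x
  rw [hpq] at this
  simpa using this

lemma precedes_self {u : List ℕ} {x : ℕ} (hx : u.count x = 2) :
    Precedes u x 1 x 2 := by
  rcases occ_eq_pair hx with ⟨p, q, hocc, hpq⟩
  unfold Precedes
  rw [nthOccPos_eq, nthOccPos_eq, hocc]
  simpa using hpq

lemma not_precedes_iff_split {x y : ℕ} (hxy : x ≠ y) {u : List ℕ}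
    (hx : u.count x = 2) (hy : u.count y = 2) :
    ¬ Precedes u x 1 y 2 ↔ ∃ s t, u = s ++ t ∧ x ∉ s ∧ y ∉ t := by
  rcases occ_eq_pair hx with ⟨p₁, p₂, hoccx, hp⟩
  rcases occ_eq_pair hy with ⟨q₁, q₂, hoccy, hq⟩
  have hp₁ : p₁ < u.length ∧ u[p₁]? = some x :=
    mem_occ.1 (by rw [hoccx]; simp)
  have hq₂ : q₂ < u.length ∧ u[q₂]? = some y :=
    mem_occ.1 (by rw [hoccy]; simp)
  have hq₁ : q₁ < u.length ∧ u[q₁]? = some y :=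
    mem_occ.1 (by rw [hoccy]; simp)
  have hPiff : Precedes u x 1 y 2 ↔ p₁ < q₂ := by
    unfold Precedes
    rw [nthOccPos_eq, nthOccPos_eq, hoccx, hoccy]
    simp
  rw [hPiff, not_lt]
  constructor
  · intro hle
    have hne : q₂ ≠ p₁ := by
      intro h
      have h3 := hq₂.2
      rw [h, hp₁.2] at h3
      exact hxy (Option.some.inj h3)
    have hlt : q₂ < p₁ := lt_of_le_of_ne hle hne
    refine ⟨u.take p₁, u.drop p₁, (List.take_append_drop p₁ u).symm, ?_, ?_⟩
    · intro hmem
      rcases List.mem_iff_getElem.1 hmem with ⟨k, hk, hke⟩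
      have hk' : k < p₁ := lt_of_lt_of_le hk (by simp [List.length_take])
      have hkocc : k ∈ occ u x := by
        rw [mem_occ]
        have hklen : k < u.length := lt_of_lt_of_le hk (by simp [List.length_take])
        refine ⟨hklen, ?_⟩
        rw [List.getElem?_eq_getElem hklen]
        rw [List.getElem_take] at hke
        rw [hke]
      rw [hoccx] at hkocc
      rcases List.mem_cons.1 hkocc with h | h
      · omega
      · simp at h; omega
    · intro hmem
      rcases List.mem_iff_getElem.1 hmem with ⟨k, hk, hke⟩
      have hkocc : p₁ + k ∈ occ u y := by
        rw [mem_occ]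
        have hklen : p₁ + k < u.length := by
          have := hk; rw [List.length_drop] at this; omega
        refine ⟨hklen, ?_⟩
        rw [List.getElem?_eq_getElem hklen]
        rw [List.getElem_drop] at hke
        rw [hke]
      rw [hoccy] at hkocc
      rcases List.mem_cons.1 hkocc with h | h
      · omega
      · simp at h; omega
  · rintro ⟨s, t, rfl, hxs, hyt⟩
    have hplen : s.length ≤ p₁ := by
      by_contra hlt
      push_neg at hlt
      have h1 : (s ++ t)[p₁]'hp₁.1 = s[p₁]'hlt := List.getElem_append_left hlt
      have h2 : (s ++ t)[p₁]'hp₁.1 = x := by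
        have h3 := hp₁.2
        rw [List.getElem?_eq_getElem hp₁.1] at h3
        exact Option.some.inj h3
      refine hxs ?_
      rw [← h2, h1]
      exact List.getElem_mem hlt
    have hqlen : q₂ < s.length := by
      by_contra hge
      push_neg at hge
      have hlen2 : q₂ - s.length < t.length := by
        have h4 := hq₂.1
        rw [List.length_append] at h4
        omega
      have h1 : (s ++ t)[q₂]'hq₂.1 = t[q₂ - s.length]'hlen2 := List.getElem_append_right hge
      have h2 : (s ++ t)[q₂]'hq₂.1 = y := by
        have h3 := hq₂.2
        rw [List.getElem?_eq_getElem hq₂.1] at h3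
        exact Option.some.inj h3
      refine hyt ?_
      rw [← h2, h1]
      exact List.getElem_mem hlen2
    omega

lemma flatMap_transfer {u v : List ℕ}
    (hsat : SatM (MWord ({[0, 0, 1, 1]} : Set (List ℕ))) u v) (δ : ℕ → List ℕ)
    (hu : u.flatMap δ = [0, 0, 1, 1]) : v.flatMap δ = [0, 0, 1, 1] := by
  have h := hsat (fun z => hW _ (δ z))
  rw [prod_map_hW, prod_map_hW, hu] at h
  have hfac : Fac ({[0, 0, 1, 1]} : Set (List ℕ)) [0, 0, 1, 1] :=
    Or.inr ⟨[0, 0, 1, 1], rfl, List.infix_refl _⟩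
  erw [hW, dif_pos hfac] at h
  rw [hW] at h
  by_cases hv : Fac ({[0, 0, 1, 1]} : Set (List ℕ)) (v.flatMap δ)
  · erw [dif_pos hv] at h
    exact (congrArg Subtype.val (Option.some.inj h)).symm
  · erw [dif_neg hv] at h
    exact absurd h (by simp)

end Aux

/-- Every identity `u ≈ v` of `M(a²b²)` (here `a = 0`, `b = 1`, so `a²b² = [0,0,1,1]`)
with `con u = con v` in which every variable occurs exactly twice on both sides
satisfies property `P_{(1 ≤ 2, 2 ≤ 2)}`: for all variables `x, y` occurring twice,
the first occurrence of `x` precedes the second occurrence of `y` in `u` iff it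
does in `v`. -/
theorem MWord_aabb_propP (u v : List ℕ)
    (hsat : SatM (MWord ({[0, 0, 1, 1]} : Set (List ℕ))) u v)
    (hcon : ∀ x : ℕ, x ∈ u ↔ x ∈ v)
    (hu2 : ∀ x ∈ u, u.count x = 2) (hv2 : ∀ x ∈ v, v.count x = 2) :
    ∀ x y : ℕ, u.count x = 2 → v.count x = 2 → u.count y = 2 → v.count y = 2 →
      (Precedes u x 1 y 2 ↔ Precedes v x 1 y 2) := by
  intro x y hux hvx huy hvy
  by_cases hxy : x = y
  · subst hxy
    exact iff_of_true (precedes_self hux) (precedes_self hvx)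
  · have hsat' : SatM (MWord ({[0, 0, 1, 1]} : Set (List ℕ))) v u := fun f => (hsat f).symm
    rw [← not_iff_not, not_precedes_iff_split hxy hux huy,
      not_precedes_iff_split hxy hvx hvy,
      ← flatMap_eq_aabb_iff hxy hux huy, ← flatMap_eq_aabb_iff hxy hvx hvy]
    exact ⟨flatMap_transfer hsat _, flatMap_transfer hsat' _⟩
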